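/- Let A and B be positive definite real symmetric n×n matrices. Then log det A − log det B = ∫₀¹ trace( (t·A + (1−t)·B)⁻¹ · (A − B) ) dt. -/

import Mathlib

open Matrix intervalIntegral

open Polynomial in
/-- Derivative of `h ↦ det (M + h • C)` at `0` when `M` is invertible. -/
lemma hasDerivAt_det_aux {n : ℕ} (M C : Matrix (Fin n) (Fin n) ℝ) (hM : IsUnit M.det) :
    HasDerivAt (fun h : ℝ => (M + h • C).det) (M.det * (M⁻¹ * C).trace) 0 := by
  set D := M⁻¹ * C with hD
  set P := (Matrix.det (1 + (X : ℝ[X]) • D.map Polynomial.C)).divX.divX with hP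
  have key : ∀ h : ℝ, (M + h • C).det
      = M.det * (1 + D.trace * h + P.eval h * h ^ 2) := by
    intro h
    have hmc : M * (M⁻¹ * C) = C := by
      rw [← Matrix.mul_assoc, Matrix.mul_nonsing_inv _ hM, Matrix.one_mul]
    have : M + h • C = M * (1 + h • D) := by
      rw [Matrix.mul_add, Matrix.mul_one, mul_smul_comm, hD, hmc]
    rw [this, det_mul, Matrix.det_one_add_smul]
  have h1 : HasDerivAt (fun h : ℝ => 1 + D.trace * h + P.eval h * h ^ 2)
      (D.trace * 1 + (P.derivative.eval 0 * 0 ^ 2 + P.eval 0 * ((2 : ℕ) * 0 ^ 1))) 0 := by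
    exact (((hasDerivAt_id (0 : ℝ)).const_mul D.trace).const_add 1).add
      ((P.hasDerivAt 0).mul (hasDerivAt_pow 2 0))
  have h2 := h1.const_mul M.det
  have h3 : HasDerivAt (fun h : ℝ => (M + h • C).det)
      (M.det * (D.trace * 1 + (P.derivative.eval 0 * 0 ^ 2 + P.eval 0 * ((2 : ℕ) * 0 ^ 1)))) 0 := by
    refine h2.congr_of_eventuallyEq ?_
    filter_upwards with h using key h
  convert h3 using 1
  ring

/-- Derivative of `t ↦ log det (t•A + (1-t)•B)` at `t₀` when the matrix there is invertible. -/
lemma hasDerivAt_logdet {n : ℕ} (A B : Matrix (Fin n) (Fin n) ℝ) (t₀ : ℝ)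
    (h : IsUnit (t₀ • A + (1 - t₀) • B).det) :
    HasDerivAt (fun t : ℝ => Real.log (t • A + (1 - t) • B).det)
      (((t₀ • A + (1 - t₀) • B)⁻¹ * (A - B)).trace) t₀ := by
  set M := t₀ • A + (1 - t₀) • B with hM
  have haux := hasDerivAt_det_aux M (A - B) h
  have hsub : HasDerivAt (fun t : ℝ => t - t₀) 1 t₀ := (hasDerivAt_id t₀).sub_const t₀
  have hcomp : HasDerivAt (fun t : ℝ => (M + (t - t₀) • (A - B)).det)
      (M.det * (M⁻¹ * (A - B)).trace * 1) t₀ := by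
    have haux' : HasDerivAt (fun h : ℝ => (M + h • (A - B)).det)
        (M.det * (M⁻¹ * (A - B)).trace) (t₀ - t₀) := by rw [sub_self]; exact haux
    simpa using haux'.comp_sub_const t₀ t₀
  have heq : ∀ t : ℝ, M + (t - t₀) • (A - B) = t • A + (1 - t) • B := by
    intro t
    ext i j
    simp [hM, Matrix.add_apply, Matrix.smul_apply, Matrix.sub_apply]
    ring
  have hdet : HasDerivAt (fun t : ℝ => (t • A + (1 - t) • B).det)
      (M.det * (M⁻¹ * (A - B)).trace) t₀ := by
    have := hcomp.congr_of_eventuallyEq (by filter_upwards with t; rw [heq t])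
    simpa using this
  have hne : (t₀ • A + (1 - t₀) • B).det ≠ 0 := h.ne_zero
  have hlog := (Real.hasDerivAt_log (by simpa [hM] using hne)).comp t₀ hdet
  have : (fun t : ℝ => Real.log (t • A + (1 - t) • B).det)
      = Real.log ∘ fun t : ℝ => (t • A + (1 - t) • B).det := rfl
  rw [this]
  convert hlog using 1
  · rfl
  · rfl
  exact (inv_mul_cancel_left₀ hne _).symm

/-- Convex combinations of positive definite matrices are positive definite. -/
lemma posDef_convex {n : ℕ} {A B : Matrix (Fin n) (Fin n) ℝ}
    (hA : A.PosDef) (hB : B.PosDef) {t : ℝ} (h0 : 0 ≤ t) (h1 : t ≤ 1) :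
    (t • A + (1 - t) • B).PosDef := by
  refine posDef_iff_dotProduct_mulVec.mpr ⟨?_, ?_⟩
  · have := hA.1
    have := hB.1
    unfold Matrix.IsHermitian at *
    rw [conjTranspose_add, conjTranspose_smul, conjTranspose_smul]
    simp_all
  · intro x hx
    have key : star x ⬝ᵥ ((t • A + (1 - t) • B) *ᵥ x)
        = t * (star x ⬝ᵥ (A *ᵥ x)) + (1 - t) * (star x ⬝ᵥ (B *ᵥ x)) := by
      rw [add_mulVec, dotProduct_add, smul_mulVec, smul_mulVec,
        dotProduct_smul, dotProduct_smul, smul_eq_mul, smul_eq_mul]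
    rw [key]
    have hAx := hA.dotProduct_mulVec_pos hx
    have hBx := hB.dotProduct_mulVec_pos hx
    rcases eq_or_lt_of_le h0 with h | h
    · rw [← h]; simpa using hBx
    · exact add_pos_of_pos_of_nonneg (mul_pos h hAx)
        (mul_nonneg (by linarith) hBx.le)

/-- mean-value integral representation of the log-determinant
difference for positive definite real symmetric matrices:
`log det A − log det B = ∫₀¹ trace ((t•A + (1−t)•B)⁻¹ * (A − B)) dt`. -/
theorem logdet_diff_integral_repr
    (n : ℕ) (A B : Matrix (Fin n) (Fin n) ℝ)
    (hA : A.PosDef) (hB : B.PosDef) :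
    Real.log A.det - Real.log B.det =
      ∫ t in (0:ℝ)..1, ((t • A + (1 - t) • B)⁻¹ * (A - B)).trace := by
  have hIcc : Set.uIcc (0:ℝ) 1 = Set.Icc 0 1 := by
    rw [Set.uIcc_of_le]; norm_num
  have hpd : ∀ t ∈ Set.uIcc (0:ℝ) 1, (t • A + (1 - t) • B).PosDef := by
    intro t ht
    rw [hIcc] at ht
    exact posDef_convex hA hB ht.1 ht.2
  have hunit : ∀ t ∈ Set.uIcc (0:ℝ) 1, IsUnit (t • A + (1 - t) • B).det :=
    fun t ht => ((hpd t ht).det_pos.ne').isUnit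
  have hderiv : ∀ t ∈ Set.uIcc (0:ℝ) 1,
      HasDerivAt (fun t : ℝ => Real.log (t • A + (1 - t) • B).det)
        (((t • A + (1 - t) • B)⁻¹ * (A - B)).trace) t :=
    fun t ht => hasDerivAt_logdet A B t (hunit t ht)
  have hcontM : Continuous (fun t : ℝ => t • A + (1 - t) • B) :=
    (continuous_id.smul continuous_const).add
      ((continuous_const.sub continuous_id).smul continuous_const)
  have hcont : ContinuousOn (fun t : ℝ => ((t • A + (1 - t) • B)⁻¹ * (A - B)).trace)
      (Set.uIcc (0:ℝ) 1) := by
    have heq : ∀ t ∈ Set.uIcc (0:ℝ) 1,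
        ((t • A + (1 - t) • B)⁻¹ * (A - B)).trace
          = ((t • A + (1 - t) • B).det)⁻¹ *
              ((t • A + (1 - t) • B).adjugate * (A - B)).trace := by
      intro t ht
      rw [Matrix.inv_def, Ring.inverse_eq_inv', smul_mul_assoc, Matrix.trace_smul,
        smul_eq_mul]
    refine ContinuousOn.congr ?_ heq
    refine ContinuousOn.mul ?_ ?_
    · exact ContinuousOn.inv₀ (hcontM.matrix_det.continuousOn)
        (fun t ht => (hpd t ht).det_pos.ne')
    · exact ((hcontM.matrix_adjugate.matrix_mul continuous_const).matrix_trace).continuousOn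
  have hint : IntervalIntegrable
      (fun t : ℝ => ((t • A + (1 - t) • B)⁻¹ * (A - B)).trace)
      MeasureTheory.volume 0 1 := hcont.intervalIntegrable
  have := intervalIntegral.integral_eq_sub_of_hasDerivAt hderiv hint
  rw [this]
  norm_num
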